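/- Equivalence identity for renewable units: at an optimal primal-dual solution, for a renewable unit in scenario k at time t, the combined settlement Π^U + Π^D := π^{u,w}_k · r^{u,w} + π^{u,w}_k · φ^{w,+}_k + π^{d,w}_k · r^{d,w} − π^w_k · φ^{w,-}_k equals π^w_k · (δw⁺_k − δw⁻_k), i.e., the net re-dispatch settled at the scenario fractional energy price. -/
import Mathlib


/-- Equivalence identity for renewable units: at an optimal primal-dual solution, for a
renewable unit in scenario `k`, the combined settlement
`π^{u,w}·r^{u,w} + π^{u,w}·φ⁺ + π^{d,w}·r^{d,w} − π^w·φ⁻` equals the net re-dispatch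
settled at the scenario fractional energy price, `π^w·(δw⁺ − δw⁻)`. -/
theorem equivalence_renewable
    (ruw rdw δp δm φp φm : ℝ)               -- reserves, re-dispatch, deviations
    (τbar τlow ζbar ζlow πw : ℝ)            -- KKT multipliers and scenario price
    (hstat_up : τbar - τlow - πw = 0)        -- stationarity in δw⁺
    (hstat_dn : ζbar - ζlow + πw = 0)        -- stationarity in δw⁻
    (hcs_up_hi : τbar * (δp - ruw - φp) = 0) -- complementary slackness
    (hcs_up_lo : τlow * δp = 0)
    (hcs_dn_hi : ζbar * (δm - φm - rdw) = 0)
    (hcs_dn_lo : ζlow * (δm - φm) = 0) :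
    τbar * ruw + τbar * φp + ζbar * rdw - πw * φm = πw * (δp - δm) := by
  linear_combination -hcs_up_hi + δp*hstat_up + hcs_up_lo - hcs_dn_hi + (δm-φm)*hstat_dn + hcs_dn_lo
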